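/- Let S = (S,+,⋆) be a finite semifield of characteristic p with identity e and spread set C, and let K = {a ∈ S : a lies in the left, middle and right nucleus of S and a⋆b = b⋆a for all b ∈ S} be its center. Then the map a ↦ φ_a is a bijection from K onto the set {μ ∈ N_r(C) ∩ N_m(C) : μ∘φ = φ∘μ for all φ ∈ C}, where N_r(C) = {μ ∈ End_{F_p}(S) : μ∘φ ∈ C for all φ ∈ C} and N_m(C) = {μ ∈ End_{F_p}(S) : φ∘μ ∈ C for all φ ∈ C}. -/
import Mathlib


/-- A finite presemifield of characteristic `p`: a (nontrivial, finite) `ZMod p`-vector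
space equipped with a multiplication that is additive (equivalently, `ZMod p`-linear)
in each argument and has no zero divisors.  For `y : S`, the map `mul.flip y` is the
right-multiplication map `φ_y : x ↦ x ⋆ y`, so the spread set is `Set.range mul.flip`. -/
structure Presemifield (p : ℕ) (S : Type*) [AddCommGroup S] [Module (ZMod p) S] where
  mul : S →ₗ[ZMod p] S →ₗ[ZMod p] S
  eq_zero_or_eq_zero : ∀ x y : S, mul x y = 0 → x = 0 ∨ y = 0

/-- The spread set `C = {φ_y : y ∈ S}` of a presemifield. -/
def Presemifield.spread {p : ℕ} {S : Type*} [AddCommGroup S] [Module (ZMod p) S]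
    (M : Presemifield p S) : Set (S →ₗ[ZMod p] S) :=
  Set.range M.mul.flip

/-- The right-nucleus set `N_r(D) = {μ : μ∘φ ∈ D for all φ ∈ D}`. -/
def rightNucleusSet {p : ℕ} {S : Type*} [AddCommGroup S] [Module (ZMod p) S]
    (D : Set (S →ₗ[ZMod p] S)) : Set (S →ₗ[ZMod p] S) :=
  {μ | ∀ φ ∈ D, μ ∘ₗ φ ∈ D}

/-- The middle-nucleus set `N_m(D) = {μ : φ∘μ ∈ D for all φ ∈ D}`. -/
def middleNucleusSet {p : ℕ} {S : Type*} [AddCommGroup S] [Module (ZMod p) S]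
    (D : Set (S →ₗ[ZMod p] S)) : Set (S →ₗ[ZMod p] S) :=
  {μ | ∀ φ ∈ D, φ ∘ₗ μ ∈ D}

theorem statement4 (p : ℕ) [Fact p.Prime]
    (S : Type*) [AddCommGroup S] [Module (ZMod p) S] [Finite S] [Nontrivial S]
    (M : Presemifield p S) (e : S)
    (he₁ : ∀ x : S, M.mul e x = x) (he₂ : ∀ x : S, M.mul x e = x) :
    Set.BijOn (fun a : S => M.mul.flip a)
      {a : S |
        (∀ b c : S, M.mul (M.mul a b) c = M.mul a (M.mul b c)) ∧
        (∀ x c : S, M.mul (M.mul x a) c = M.mul x (M.mul a c)) ∧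
        (∀ x b : S, M.mul (M.mul x b) a = M.mul x (M.mul b a)) ∧
        (∀ b : S, M.mul a b = M.mul b a)}
      {μ : S →ₗ[ZMod p] S |
        μ ∈ rightNucleusSet M.spread ∧ μ ∈ middleNucleusSet M.spread ∧
        ∀ φ ∈ M.spread, μ ∘ₗ φ = φ ∘ₗ μ} := by
  refine ⟨?_, ?_, ?_⟩
  · rintro a ⟨hl, hm, hr, hc⟩
    refine ⟨?_, ?_, ?_⟩
    · rintro φ ⟨y, rfl⟩
      exact ⟨M.mul y a, by ext x; exact (hr x y).symm⟩
    · rintro φ ⟨y, rfl⟩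
      exact ⟨M.mul a y, by ext x; exact (hm x y).symm⟩
    · rintro φ ⟨y, rfl⟩
      ext x
      show M.mul (M.mul x y) a = M.mul (M.mul x a) y
      rw [hr x y, ← hc y, ← hm x y]
  · intro a _ b _ h
    have := congrArg (fun f : S →ₗ[ZMod p] S => f e) h
    simpa [he₁] using this
  · rintro μ ⟨hr', hm', hc'⟩
    set a := μ e with ha
    -- key : μ (x ⋆ y) = x ⋆ μ y
    have key : ∀ y x : S, μ (M.mul x y) = M.mul x (μ y) := by
      intro y x
      obtain ⟨z, hz⟩ := hr' (M.mul.flip y) ⟨y, rfl⟩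
      have hz' : z = μ y := by
        have := congrArg (fun f : S →ₗ[ZMod p] S => f e) hz
        simpa [he₁] using this
      have := congrArg (fun f : S →ₗ[ZMod p] S => f x) hz
      simp only [LinearMap.flip_apply, LinearMap.comp_apply] at this
      rw [← this, hz']
    -- key2 : μ x ⋆ y = x ⋆ (a ⋆ y)
    have key2 : ∀ y x : S, M.mul (μ x) y = M.mul x (M.mul a y) := by
      intro y x
      obtain ⟨z, hz⟩ := hm' (M.mul.flip y) ⟨y, rfl⟩
      have hz' : z = M.mul a y := by
        have := congrArg (fun f : S →ₗ[ZMod p] S => f e) hz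
        simpa [he₁, ← ha] using this
      have := congrArg (fun f : S →ₗ[ZMod p] S => f x) hz
      simp only [LinearMap.flip_apply, LinearMap.comp_apply] at this
      rw [← this, hz']
    -- commute : μ (x ⋆ y) = μ x ⋆ y
    have key3 : ∀ y x : S, μ (M.mul x y) = M.mul (μ x) y := by
      intro y x
      have := congrArg (fun f : S →ₗ[ZMod p] S => f x) (hc' (M.mul.flip y) ⟨y, rfl⟩)
      simpa using this
    have hμ : ∀ x : S, μ x = M.mul x a := by
      intro x
      have := key e x
      rwa [he₂] at this
    have hcomm : ∀ b : S, M.mul a b = M.mul b a := by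
      intro b
      have h1 := key3 b e
      rw [he₁, ← ha, hμ b] at h1
      exact h1.symm
    have hright : ∀ x b : S, M.mul (M.mul x b) a = M.mul x (M.mul b a) := by
      intro x b
      have := key b x
      rwa [hμ (M.mul x b), hμ b] at this
    have hmid : ∀ x c : S, M.mul (M.mul x a) c = M.mul x (M.mul a c) := by
      intro x c
      have := key2 c x
      rwa [hμ x] at this
    refine ⟨a, ⟨?_, hmid, hright, hcomm⟩, ?_⟩
    · intro b c
      calc M.mul (M.mul a b) c = M.mul (M.mul b a) c := by rw [hcomm b]
        _ = M.mul b (M.mul a c) := hmid b c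
        _ = M.mul b (M.mul c a) := by rw [hcomm c]
        _ = M.mul (M.mul b c) a := (hright b c).symm
        _ = M.mul a (M.mul b c) := (hcomm _).symm
    · ext x
      exact (hμ x).symm
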